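/- Induction step for the update-time recurrence: let T_A(m) = P·m·n^{1/k} (hub-labeling total update time), and suppose oracle B_i has amortized update time t_i(n,m) = P^i·m^{3/(3i+1)}·n^{4i/k}. Setting ℓ = m^{(3i+1)/(3i+4)} and μ = P·n^{1/k}, the quantity T_A(m)/ℓ + t_i(n, ℓ·(1+2μ))·(2+4μ) is at most c·P^{i+1}·m^{3/(3(i+1)+1)}·n^{4(i+1)/k} for a suitable polylogarithmic factor P and constant c (treating P as an upper bound absorbing polylog factors, with n, m ≥ 2 and k ≥ 1). -/

import Mathlib

set_option maxHeartbeats 1000000 in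
/-- induction step of the update-time recurrence of Theorem 3.  With
T_A(m) = P·m·n^{1/k}, t_i(n,m) = P^i·m^{3/(3i+1)}·n^{4i/k}, ℓ = m^{(3i+1)/(3i+4)} and
μ = P·n^{1/k}, the quantity T_A(m)/ℓ + t_i(n, ℓ(1+2μ))·(2+4μ) is at most
c·P'^{i+1}·m^{3/(3(i+1)+1)}·n^{4(i+1)/k}, for the suitable polylogarithmic factor P' = P⁴
(absorbing polylog factors) and the constant c = 200. -/
theorem update_time_recurrence_step (n m k P : ℝ) (i : ℕ)
    (hn : 2 ≤ n) (hm : 2 ≤ m) (hk : 1 ≤ k) (hP : 1 ≤ P) :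
    P * m * n ^ (1 / k) / m ^ ((3 * (i : ℝ) + 1) / (3 * (i : ℝ) + 4)) +
        P ^ (i : ℝ) *
          (m ^ ((3 * (i : ℝ) + 1) / (3 * (i : ℝ) + 4)) * (1 + 2 * (P * n ^ (1 / k)))) ^
            (3 / (3 * (i : ℝ) + 1)) *
          n ^ (4 * (i : ℝ) / k) * (2 + 4 * (P * n ^ (1 / k))) ≤
      200 * (P ^ (4 : ℝ)) ^ ((i : ℝ) + 1) * m ^ (3 / (3 * ((i : ℝ) + 1) + 1)) *
        n ^ (4 * ((i : ℝ) + 1) / k) := by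
  have hn0 : (0:ℝ) < n := by linarith
  have hm0 : (0:ℝ) < m := by linarith
  have hP0 : (0:ℝ) < P := by linarith
  have hk0 : (0:ℝ) < k := by linarith
  have hI0 : (0:ℝ) ≤ (i:ℝ) := Nat.cast_nonneg i
  set I : ℝ := (i:ℝ) with hIdef
  have h31 : (0:ℝ) < 3*I+1 := by linarith
  have h34 : (0:ℝ) < 3*I+4 := by linarith
  set ν : ℝ := n ^ (1/k) with hν
  have hν1 : (1:ℝ) ≤ ν := Real.one_le_rpow (by linarith) (by positivity)
  set A : ℝ := m ^ (3/(3*I+4)) with hA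
  have hA1 : (1:ℝ) ≤ A := Real.one_le_rpow (by linarith) (by positivity)
  have hμ1 : (1:ℝ) ≤ P * ν := one_le_mul_of_one_le_of_one_le hP hν1
  -- simplify exponents on RHS
  have hRHSm : 3 / (3 * (I + 1) + 1) = 3/(3*I+4) := by ring_nf
  have hRHSP : (P ^ (4:ℝ)) ^ (I + 1) = P ^ (4*(I+1)) := by
    rw [← Real.rpow_mul hP0.le]
  rw [hRHSm, hRHSP]
  -- term 1 simplification
  have hmsplit : m ^ ((3*I+1)/(3*I+4)) * A = m := by
    rw [hA, ← Real.rpow_add hm0, show (3*I+1)/(3*I+4) + 3/(3*I+4) = 1 by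
      field_simp; ring, Real.rpow_one]
  have he1pos : (0:ℝ) < m ^ ((3*I+1)/(3*I+4)) := by positivity
  have hterm1 : P * m * ν / m ^ ((3*I+1)/(3*I+4)) = P * A * ν := by
    rw [div_eq_iff he1pos.ne']
    nlinarith [hmsplit]
  -- ℓ ^ (3/(3I+1)) = A
  have hℓ : (m ^ ((3*I+1)/(3*I+4))) ^ (3/(3*I+1)) = A := by
    rw [← Real.rpow_mul hm0.le, hA]
    congr 1
    field_simp
  have hX1 : (1:ℝ) ≤ 1 + 2*(P*ν) := by linarith
  have hsplit2 : (m ^ ((3*I+1)/(3*I+4)) * (1 + 2*(P*ν))) ^ (3/(3*I+1))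
      = A * (1 + 2*(P*ν)) ^ (3/(3*I+1)) := by
    rw [Real.mul_rpow he1pos.le (by linarith), hℓ]
  rw [hterm1, hsplit2]
  -- bound X^e
  have he3 : 3/(3*I+1) ≤ 3 := by
    rw [div_le_iff₀ h31]; nlinarith
  have hXe : (1+2*(P*ν)) ^ (3/(3*I+1)) ≤ 27 * P^(3:ℝ) * n ^ (3/k) := by
    calc (1+2*(P*ν)) ^ (3/(3*I+1)) ≤ (1+2*(P*ν)) ^ (3:ℝ) :=
          Real.rpow_le_rpow_of_exponent_le hX1 he3
      _ ≤ (3*(P*ν)) ^ (3:ℝ) :=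
          Real.rpow_le_rpow (by linarith) (by linarith) (by norm_num)
      _ = 27 * P^(3:ℝ) * n ^ (3/k) := by
          rw [Real.mul_rpow (by norm_num) (by positivity),
            Real.mul_rpow hP0.le (by positivity), hν, ← Real.rpow_mul hn0.le,
            show (1/k*3) = 3/k by ring]
          have h27 : (3:ℝ)^(3:ℝ) = 27 := by
            rw [show (3:ℝ) = ((3:ℕ):ℝ) by norm_num, Real.rpow_natCast]
            norm_num
          rw [h27]; ring
  -- power collections
  have hPcol : P ^ I * P ^ (3:ℝ) * P ≤ P ^ (4*(I+1)) := by
    calc P ^ I * P ^ (3:ℝ) * P = P ^ (I + 3 + 1) := by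
          rw [Real.rpow_add hP0, Real.rpow_add hP0, Real.rpow_one]
      _ ≤ P ^ (4*(I+1)) := Real.rpow_le_rpow_of_exponent_le hP (by linarith)
  have hncol : n ^ (3/k) * n ^ (4*I/k) * ν = n ^ (4*(I+1)/k) := by
    rw [hν, ← Real.rpow_add hn0, ← Real.rpow_add hn0]
    congr 1
    field_simp
    ring
  -- term bounds
  have hQ : (0:ℝ) ≤ P ^ (4*(I+1)) * A * n ^ (4*(I+1)/k) := by positivity
  have hb1 : P * A * ν ≤ P ^ (4*(I+1)) * A * n ^ (4*(I+1)/k) := by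
    have h1 : P ≤ P ^ (4*(I+1)) := by
      nth_rewrite 1 [← Real.rpow_one P]
      exact Real.rpow_le_rpow_of_exponent_le hP (by linarith)
    have h2 : ν ≤ n ^ (4*(I+1)/k) := by
      rw [hν]
      apply Real.rpow_le_rpow_of_exponent_le (by linarith)
      rw [div_le_div_iff₀ hk0 hk0]
      nlinarith
    gcongr
  have hb2 : P ^ I * (A * (1+2*(P*ν)) ^ (3/(3*I+1))) * n ^ (4*I/k) * (2 + 4*(P*ν))
      ≤ 162 * (P ^ (4*(I+1)) * A * n ^ (4*(I+1)/k)) := by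
    have hY : 2 + 4*(P*ν) ≤ 6*(P*ν) := by linarith
    calc P ^ I * (A * (1+2*(P*ν)) ^ (3/(3*I+1))) * n ^ (4*I/k) * (2 + 4*(P*ν))
        ≤ P ^ I * (A * (27 * P^(3:ℝ) * n ^ (3/k))) * n ^ (4*I/k) * (6*(P*ν)) := by
          gcongr
      _ = 162 * ((P ^ I * P ^ (3:ℝ) * P) * A * (n ^ (3/k) * n ^ (4*I/k) * ν)) := by ring
      _ ≤ 162 * (P ^ (4*(I+1)) * A * n ^ (4*(I+1)/k)) := by
          rw [hncol]
          have : (0:ℝ) ≤ A * n ^ (4*(I+1)/k) := by positivity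
          nlinarith [hPcol, this]
  linarith [hb1, hb2, hQ]
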